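/- For every square-free word w over {0,1,2} and any two distinct letters a,b in {0,1,2}, the image h(ab) under the morphism h(0)=10, h(1)=32, h(2)=1230103012 is reduced; consequently h maps every square-free word over {0,1,2} to a reduced word over {0,1,2,3}. -/

import Mathlib

def SqFree {α : Type*} (w : List α) : Prop :=
  ∀ v : List α, v ≠ [] → ¬ (v ++ v) <:+: w

def Reduced (w : List (Fin 4)) : Prop :=
  ∀ p ∈ ([[0,2],[2,0],[1,3],[3,1]] : List (List (Fin 4))), ¬ p <:+: w

def DeanWord (w : List (Fin 4)) : Prop := Reduced w ∧ SqFree w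

def IFactor {α : Type*} (v : List α) (w : ℕ → α) : Prop :=
  ∃ i, v = (List.range v.length).map fun k => w (i + k)

def ISqFree {α : Type*} (w : ℕ → α) : Prop :=
  ∀ v : List α, v ≠ [] → ¬ IFactor (v ++ v) w

def IReduced (w : ℕ → Fin 4) : Prop :=
  ∀ p ∈ ([[0,2],[2,0],[1,3],[3,1]] : List (List (Fin 4))), ¬ IFactor p w

def IDean (w : ℕ → Fin 4) : Prop := IReduced w ∧ ISqFree w

def h : Fin 3 → List (Fin 4) := ![[1,0],[3,2],[1,2,3,0,1,0,3,0,1,2]]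

def R (a b : Fin 4) : Prop := (a, b) ∉ ([(0,2),(2,0),(1,3),(3,1)] : List (Fin 4 × Fin 4))

instance : DecidableRel R := fun a b =>
  inferInstanceAs (Decidable ((a, b) ∉ ([(0,2),(2,0),(1,3),(3,1)] : List (Fin 4 × Fin 4))))

lemma chain'_reduced {w : List (Fin 4)} (hc : List.IsChain R w) : Reduced w := by
  intro p hp hinf
  have := (hc.infix hinf)
  fin_cases hp <;> simp [List.isChain_pair] at this <;> revert this <;> decide

lemma sqfree_tail {α : Type*} {a : α} {l : List α} (hs : SqFree (a :: l)) : SqFree l := by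
  intro v hv hinf
  exact hs v hv (hinf.trans (List.suffix_cons a l).isInfix)

lemma ne_of_sqfree {a b : Fin 3} {t : List (Fin 3)} (hs : SqFree (a :: b :: t)) : a ≠ b := by
  rintro rfl
  exact hs [a] (by simp) ⟨[], t, rfl⟩

lemma chain_h (a : Fin 3) : List.IsChain R (h a) := by fin_cases a <;> simp [h] <;> decide

lemma chain_bind : ∀ w : List (Fin 3), SqFree w → List.IsChain R (w.flatMap h) := by
  intro w
  induction w with
  | nil => intro _; simp
  | cons a t ih =>
    intro hs
    match t with
    | [] => simpa using chain_h a
    | b :: t' =>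
      have hab := ne_of_sqfree hs
      have htail : List.IsChain R ((b :: t').flatMap h) := ih (sqfree_tail hs)
      show List.IsChain R (h a ++ (b :: t').flatMap h)
      refine List.isChain_append.mpr ⟨chain_h a, htail, ?_⟩
      intro x hx y hy
      have : (b :: t').flatMap h = h b ++ t'.flatMap h := by simp
      rw [this] at hy
      fin_cases a <;> fin_cases b <;> (try exact absurd rfl hab) <;>
        simp [h] at hx hy <;> subst hx <;> subst hy <;> decide

theorem stmt5 :
    (∀ a b : Fin 3, a ≠ b → Reduced (h a ++ h b)) ∧
    (∀ w : List (Fin 3), SqFree w → Reduced (w.flatMap h)) := by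
  constructor
  · intro a b hab
    apply chain'_reduced
    fin_cases a <;> fin_cases b <;> (try exact absurd rfl hab) <;> simp [h] <;> decide
  · intro w hw
    exact chain'_reduced (chain_bind w hw)
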